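/- If A is an intersecting sub-family of a hereditary family H, then |A| ≤ |H|/2. -/

import Mathlib

open Finset

theorem intersecting_subfamily_of_hereditary {α : Type*} [DecidableEq α]
    (H 𝒜 : Finset (Finset α))
    (hH : ∀ A ∈ H, ∀ B ⊆ A, B ∈ H)
    (h𝒜 : 𝒜 ⊆ H)
    (hint : ∀ A ∈ 𝒜, ∀ B ∈ 𝒜, (A ∩ B).Nonempty) :
    2 * 𝒜.card ≤ H.card := by
  classical
  set s : Finset α := H.sup id with hs
  have hHs : ∀ t ∈ H, t ⊆ s := fun t ht => le_sup (f := id) ht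
  set U : Finset (Finset α) := s.powerset.filter (fun t => ∃ A ∈ 𝒜, A ⊆ t) with hU
  set D : Finset (Finset α) := s.powerset.filter (fun t => ¬ ∃ A ∈ 𝒜, A ⊆ t) with hD
  -- D is a lower set
  have hDlow : IsLowerSet (D : Set (Finset α)) := by
    intro u v hvu hu
    simp only [hD, coe_filter, Set.mem_setOf_eq, mem_powerset] at hu ⊢
    exact ⟨hvu.trans hu.1, fun ⟨A, hA, hAv⟩ => hu.2 ⟨A, hA, hAv.trans hvu⟩⟩
  have hHlow : IsLowerSet (H : Set (Finset α)) := fun u v hvu hu => hH u hu v hvu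
  have hDs : ∀ t ∈ D, t ⊆ s := fun t ht => mem_powerset.1 (mem_filter.1 ht).1
  -- Harris-Kleitman
  have hk : #H * #D ≤ 2 ^ #s * #(H ∩ D) := hHlow.le_card_inter_finset' hDlow hHs hDs
  -- H ∩ D ⊆ H \ 𝒜
  have hHD : H ∩ D ⊆ H \ 𝒜 := by
    intro t ht
    rw [mem_inter] at ht
    rw [mem_sdiff]
    refine ⟨ht.1, fun ht𝒜 => ?_⟩
    exact (mem_filter.1 ht.2).2 ⟨t, ht𝒜, subset_rfl⟩
  have hcard1 : #(H ∩ D) ≤ #H - #𝒜 := by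
    calc #(H ∩ D) ≤ #(H \ 𝒜) := card_le_card hHD
    _ = #H - #𝒜 := card_sdiff_of_subset h𝒜
  -- 2 ^ #s = #U + #D
  have hsplit : #U + #D = 2 ^ #s := by
    rw [hU, hD, card_filter_add_card_filter_not, card_powerset]
  -- injection U → D via complement in s
  have hinj : #U ≤ #D := by
    apply card_le_card_of_injOn (fun t => s \ t)
    · intro t ht
      rw [mem_coe] at ht ⊢
      rw [hU, mem_filter, mem_powerset] at ht
      obtain ⟨hts, B, hB, hBt⟩ := ht
      rw [hD, mem_filter, mem_powerset]
      refine ⟨sdiff_subset, fun ⟨A, hA, hAst⟩ => ?_⟩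
      obtain ⟨x, hx⟩ := hint A hA B hB
      rw [mem_inter] at hx
      exact (mem_sdiff.1 (hAst hx.1)).2 (hBt hx.2)
    · intro t₁ h₁ t₂ h₂ h
      rw [mem_coe] at h₁ h₂
      have hs₁ := mem_powerset.1 (mem_filter.1 h₁).1
      have hs₂ := mem_powerset.1 (mem_filter.1 h₂).1
      have := congrArg (fun t => s \ t) h
      simpa [sdiff_sdiff_right_self, inf_eq_inter,
        inter_eq_right.2 hs₁, inter_eq_right.2 hs₂] using this
  -- D nonempty (∅ ∈ D since ∅ ∉ 𝒜)
  have hDpos : 0 < #D := by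
    refine card_pos.2 ⟨∅, ?_⟩
    rw [hD, mem_filter, mem_powerset]
    refine ⟨empty_subset _, fun ⟨A, hA, hA0⟩ => ?_⟩
    have := hint A hA A hA
    rw [subset_empty] at hA0
    subst hA0
    simp at this
  have h2s : 2 ^ #s ≤ 2 * #D := by omega
  have key : #H * #D ≤ 2 * #D * (#H - #𝒜) :=
    hk.trans (Nat.mul_le_mul h2s hcard1)
  have h𝒜H : #𝒜 ≤ #H := card_le_card h𝒜
  have : #D * #H ≤ #D * (2 * (#H - #𝒜)) := by
    calc #D * #H = #H * #D := mul_comm _ _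
    _ ≤ 2 * #D * (#H - #𝒜) := key
    _ = #D * (2 * (#H - #𝒜)) := by ring
  have := Nat.le_of_mul_le_mul_left this hDpos
  omega
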